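/- Let G be a nearly regular simple graph on n vertices, i.e., a graph in which the degrees of any two vertices differ by at most 1. If H is a simple graph with per(xI − L(H)) = per(xI − L(G)) as polynomials in x (or with per(xI − Q(H)) = per(xI − Q(G)) as polynomials in x), then H has the same degree sequence as G (the multisets of vertex degrees of G and H coincide). -/
import Mathlib


open scoped Classical
open Polynomial

noncomputable section

set_option linter.unusedSectionVars false

namespace NRAux

open Finset

open Finset

/-! ### Coefficients of products of `X - C a` -/

def Esq (s : Multiset ℚ) : ℚ := (s.sum ^ 2 - (s.map (fun x => x ^ 2)).sum) / 2

lemma Esq_cons (a : ℚ) (s : Multiset ℚ) : Esq (a ::ₘ s) = Esq s + a * s.sum := by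
  simp only [Esq, Multiset.sum_cons, Multiset.map_cons]
  ring

def PP (s : Multiset ℚ) : Polynomial ℚ := (s.map (fun a => X - C a)).prod

lemma PP_cons (a : ℚ) (s : Multiset ℚ) : PP (a ::ₘ s) = (X - C a) * PP s := by
  simp [PP]

lemma PP_monic (s : Multiset ℚ) : (PP s).Monic := by
  apply monic_multiset_prod_of_monic
  intro a _
  exact monic_X_sub_C a

lemma PP_natDegree (s : Multiset ℚ) : (PP s).natDegree = Multiset.card s := by
  rw [PP, natDegree_multiset_prod_of_monic]
  · simp
  · intro f hf
    obtain ⟨a, _, rfl⟩ := Multiset.mem_map.mp hf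
    exact monic_X_sub_C a

lemma PP_coeff_card (s : Multiset ℚ) : (PP s).coeff (Multiset.card s) = 1 := by
  have := (PP_monic s).coeff_natDegree
  rwa [PP_natDegree] at this

lemma PP_coeff_pred (s : Multiset ℚ) : ∀ a : ℚ,
    (PP (a ::ₘ s)).coeff (Multiset.card s) = -(a ::ₘ s).sum := by
  induction s using Multiset.induction_on with
  | empty => intro a; simp [PP]
  | cons b t ih =>
    intro a
    rw [PP_cons, mul_comm, Multiset.card_cons, coeff_mul_X_sub_C, ih b]
    have h1 : (PP (b ::ₘ t)).coeff (Multiset.card (b ::ₘ t)) = 1 := PP_coeff_card _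
    rw [Multiset.card_cons] at h1
    rw [h1]
    simp [Multiset.sum_cons]
    ring

lemma PP_coeff_sub2 (s : Multiset ℚ) : ∀ a b : ℚ,
    (PP (a ::ₘ b ::ₘ s)).coeff (Multiset.card s) = Esq (a ::ₘ b ::ₘ s) := by
  induction s using Multiset.induction_on with
  | empty =>
    intro a b
    have : PP (a ::ₘ b ::ₘ 0) = (X - C a) * ((X - C b) * 1) := by
      simp [PP]
    rw [this]
    simp only [Multiset.card_zero, coeff_zero_eq_eval_zero]
    simp [Esq]
    ring
  | cons c t ih =>
    intro a b
    rw [PP_cons, mul_comm, Multiset.card_cons, coeff_mul_X_sub_C, ih b c]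
    have h2 : (PP (b ::ₘ c ::ₘ t)).coeff (Multiset.card t + 1) = -(b ::ₘ c ::ₘ t).sum := by
      have := PP_coeff_pred (c ::ₘ t) b
      rwa [Multiset.card_cons] at this
    rw [h2]
    rw [Esq_cons a (b ::ₘ c ::ₘ t)]
    ring


open Finset

lemma PP_coeff_pred' (s : Multiset ℚ) (n : ℕ) (hc : Multiset.card s = n) (hn : 1 ≤ n) :
    (PP s).coeff (n - 1) = -s.sum := by
  obtain ⟨a, ha⟩ := Multiset.card_pos_iff_exists_mem.mp (show 0 < Multiset.card s by omega)
  obtain ⟨t, rfl⟩ := Multiset.exists_cons_of_mem ha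
  rw [Multiset.card_cons] at hc
  have ht : Multiset.card t = n - 1 := by omega
  rw [← ht, PP_coeff_pred]

lemma PP_coeff_sub2' (s : Multiset ℚ) (n : ℕ) (hc : Multiset.card s = n) (hn : 2 ≤ n) :
    (PP s).coeff (n - 2) = Esq s := by
  obtain ⟨a, ha⟩ := Multiset.card_pos_iff_exists_mem.mp (show 0 < Multiset.card s by omega)
  obtain ⟨t, rfl⟩ := Multiset.exists_cons_of_mem ha
  rw [Multiset.card_cons] at hc
  obtain ⟨b, hb⟩ := Multiset.card_pos_iff_exists_mem.mp (show 0 < Multiset.card t by omega)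
  obtain ⟨u, rfl⟩ := Multiset.exists_cons_of_mem hb
  rw [Multiset.card_cons] at hc
  have hu : Multiset.card u = n - 2 := by omega
  rw [← hu, PP_coeff_sub2]

variable {V : Type*} [Fintype V]

def cpoly (M : Matrix V V ℚ) : Polynomial ℚ :=
  Matrix.permanent
    (Matrix.diagonal (fun _ : V => (X : Polynomial ℚ)) - M.map Polynomial.C)

def termP (M : Matrix V V ℚ) (σ : Equiv.Perm V) : Polynomial ℚ :=
  ∏ i, (Matrix.diagonal (fun _ : V => (X : Polynomial ℚ)) - M.map Polynomial.C) (σ i) i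

lemma cpoly_eq_sum (M : Matrix V V ℚ) : cpoly M = ∑ σ : Equiv.Perm V, termP M σ := rfl

lemma prod_eq_PP (s : Finset V) (f : V → ℚ) :
    (∏ i ∈ s, (X - C (f i))) = PP (s.val.map f) := by
  rw [PP, Multiset.map_map]
  rfl

lemma card_val_map (s : Finset V) (f : V → ℚ) :
    Multiset.card (s.val.map f) = s.card := by simp

lemma termP_eq (M : Matrix V V ℚ) (σ : Equiv.Perm V) : termP M σ =
    C (∏ i ∈ σ.support, -(M (σ i) i)) * ∏ i ∈ σ.supportᶜ, (X - C (M i i)) := by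
  rw [termP, ← Finset.prod_mul_prod_compl σ.support, map_prod]
  congr 1
  · apply Finset.prod_congr rfl
    intro i hi
    have h : σ i ≠ i := Equiv.Perm.mem_support.mp hi
    simp [Matrix.sub_apply, Matrix.diagonal_apply, Matrix.map_apply, h]
  · apply Finset.prod_congr rfl
    intro i hi
    have h : σ i = i := by
      have := Finset.mem_compl.mp hi
      simpa [Equiv.Perm.mem_support] using this
    simp [Matrix.sub_apply, Matrix.diagonal_apply, Matrix.map_apply, h]

lemma termP_natDegree_le (M : Matrix V V ℚ) (σ : Equiv.Perm V) :
    (termP M σ).natDegree ≤ σ.supportᶜ.card := by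
  rw [termP_eq]
  refine (natDegree_C_mul_le _ _).trans ?_
  rw [prod_eq_PP, PP_natDegree, card_val_map]

lemma termP_natDegree_lt (M : Matrix V V ℚ) {σ : Equiv.Perm V} {k : ℕ}
    (h : σ.supportᶜ.card < k) : (termP M σ).coeff k = 0 := by
  apply coeff_eq_zero_of_natDegree_lt
  exact lt_of_le_of_lt (termP_natDegree_le M σ) h

lemma support_card_le (σ : Equiv.Perm V) : σ.support.card ≤ Fintype.card V := by
  simpa using Finset.card_le_univ σ.support

lemma termP_one (M : Matrix V V ℚ) :
    termP M 1 = PP (univ.val.map (fun i => M i i)) := by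
  rw [termP_eq, ← prod_eq_PP]
  simp [Equiv.Perm.support_one]

lemma cpoly_natDegree_le (M : Matrix V V ℚ) :
    (cpoly M).natDegree ≤ Fintype.card V := by
  rw [cpoly_eq_sum]
  apply natDegree_sum_le_of_forall_le
  intro σ _
  refine (termP_natDegree_le M σ).trans ?_
  simpa using Finset.card_le_univ σ.supportᶜ

lemma cpoly_coeff_card (M : Matrix V V ℚ) :
    (cpoly M).coeff (Fintype.card V) = 1 := by
  rw [cpoly_eq_sum, finset_sum_coeff,
    Finset.sum_eq_single_of_mem 1 (Finset.mem_univ _)]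
  · rw [termP_one]
    have hc : Multiset.card (univ.val.map (fun i => M i i)) = Fintype.card V := by
      rw [card_val_map, Finset.card_univ]
    rw [← hc, PP_coeff_card]
  · intro σ _ hσ
    apply termP_natDegree_lt
    have h2 : 1 < σ.support.card := Equiv.Perm.one_lt_card_support_of_ne_one hσ
    have hle := support_card_le σ
    rw [Finset.card_compl]
    omega

lemma cpoly_natDegree (M : Matrix V V ℚ) :
    (cpoly M).natDegree = Fintype.card V :=
  le_antisymm (cpoly_natDegree_le M)
    (le_natDegree_of_ne_zero (by rw [cpoly_coeff_card]; exact one_ne_zero))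

lemma cpoly_coeff_pred (M : Matrix V V ℚ) (hn : 1 ≤ Fintype.card V) :
    (cpoly M).coeff (Fintype.card V - 1) = -(∑ i, M i i) := by
  rw [cpoly_eq_sum, finset_sum_coeff,
    Finset.sum_eq_single_of_mem 1 (Finset.mem_univ _)]
  · rw [termP_one, PP_coeff_pred' _ _ (by rw [card_val_map, Finset.card_univ]) hn]
    rfl
  · intro σ _ hσ
    apply termP_natDegree_lt
    have h2 : 1 < σ.support.card := Equiv.Perm.one_lt_card_support_of_ne_one hσ
    have hle := support_card_le σ
    rw [Finset.card_compl]
    omega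

lemma cpoly_coeff_sub2 (M : Matrix V V ℚ) (hn : 2 ≤ Fintype.card V) :
    (cpoly M).coeff (Fintype.card V - 2)
      = Esq (univ.val.map (fun i => M i i))
        + (∑ p ∈ univ.offDiag, M p.1 p.2 * M p.2 p.1) / 2 := by
  rw [cpoly_eq_sum, finset_sum_coeff,
    ← Finset.sum_filter_add_sum_filter_not univ (fun σ => σ.support.card = 2)]
  have hpart2 : ∑ σ ∈ univ.filter (fun σ : Equiv.Perm V => ¬ σ.support.card = 2),
      (termP M σ).coeff (Fintype.card V - 2)
      = Esq (univ.val.map (fun i => M i i)) := by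
    have hmem : (1 : Equiv.Perm V) ∈ univ.filter
        (fun σ : Equiv.Perm V => ¬ σ.support.card = 2) := by
      refine Finset.mem_filter.mpr ⟨Finset.mem_univ _, ?_⟩
      rw [Equiv.Perm.support_one]
      simp
    rw [Finset.sum_eq_single_of_mem 1 hmem]
    · rw [termP_one, PP_coeff_sub2' _ _ (by rw [card_val_map, Finset.card_univ]) hn]
    · intro σ hσf hσ
      have hne2 : ¬ σ.support.card = 2 := (Finset.mem_filter.mp hσf).2
      apply termP_natDegree_lt
      have h2 : 1 < σ.support.card := Equiv.Perm.one_lt_card_support_of_ne_one hσ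
      have hle := support_card_le σ
      rw [Finset.card_compl]
      omega
  have hpart1 : ∑ σ ∈ univ.filter (fun σ : Equiv.Perm V => σ.support.card = 2),
      (termP M σ).coeff (Fintype.card V - 2)
      = ∑ σ ∈ univ.filter (fun σ : Equiv.Perm V => σ.support.card = 2),
          ∏ i ∈ σ.support, -(M (σ i) i) := by
    apply Finset.sum_congr rfl
    intro σ hσ
    have h2 : σ.support.card = 2 := (Finset.mem_filter.mp hσ).2
    rw [termP_eq, coeff_C_mul, prod_eq_PP]
    have hcc : Multiset.card (σ.supportᶜ.val.map (fun i => M i i))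
        = Fintype.card V - 2 := by
      rw [card_val_map, Finset.card_compl, h2]
    rw [← hcc, PP_coeff_card, mul_one]
  have hswap : 2 * (∑ σ ∈ univ.filter (fun σ : Equiv.Perm V => σ.support.card = 2),
        ∏ i ∈ σ.support, -(M (σ i) i))
      = ∑ p ∈ univ.offDiag, M p.1 p.2 * M p.2 p.1 := by
    have hmaps : ∀ p ∈ (univ : Finset V).offDiag,
        Equiv.swap p.1 p.2 ∈ univ.filter (fun σ : Equiv.Perm V => σ.support.card = 2) := by
      intro p hp
      obtain ⟨-, -, hne⟩ := Finset.mem_offDiag.mp hp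
      refine Finset.mem_filter.mpr ⟨Finset.mem_univ _, ?_⟩
      rw [Equiv.Perm.support_swap hne, Finset.card_pair hne]
    rw [← Finset.sum_fiberwise_of_maps_to hmaps (fun p => M p.1 p.2 * M p.2 p.1),
      Finset.mul_sum]
    apply Finset.sum_congr rfl
    intro σ hσ
    have h2 : σ.support.card = 2 := (Finset.mem_filter.mp hσ).2
    obtain ⟨a, b, hab, rfl⟩ := Equiv.Perm.card_support_eq_two.mp h2
    have hfib : (univ : Finset V).offDiag.filter
        (fun p => Equiv.swap p.1 p.2 = Equiv.swap a b) = {(a, b), (b, a)} := by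
      ext ⟨i, j⟩
      simp only [Finset.mem_filter, Finset.mem_offDiag, Finset.mem_univ, true_and,
        Finset.mem_insert, Finset.mem_singleton, Prod.mk.injEq]
      constructor
      · rintro ⟨hij, hsw⟩
        have happ : Equiv.swap a b i = j := by
          rw [← hsw, Equiv.swap_apply_left]
        by_cases hia : i = a
        · subst hia
          rw [Equiv.swap_apply_left] at happ
          exact Or.inl ⟨rfl, happ.symm⟩
        · by_cases hib : i = b
          · subst hib
            rw [Equiv.swap_apply_right] at happ
            exact Or.inr ⟨rfl, happ.symm⟩
          · rw [Equiv.swap_apply_of_ne_of_ne hia hib] at happ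
            exact absurd happ hij
      · rintro (⟨rfl, rfl⟩ | ⟨rfl, rfl⟩)
        · exact ⟨hab, rfl⟩
        · exact ⟨hab.symm, Equiv.swap_comm _ _⟩
    rw [hfib]
    have hpairne : ((a, b) : V × V) ≠ (b, a) := by
      simp [Prod.ext_iff, hab]
    rw [Finset.sum_pair hpairne, Equiv.Perm.support_swap hab, Finset.prod_pair hab]
    simp only [Equiv.swap_apply_left, Equiv.swap_apply_right]
    ring
  rw [hpart1, hpart2]
  rw [← hswap]
  ring



open Finset

lemma sum_fprod (k : ℤ) (u : Multiset ℤ) :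
    (u.map (fun x => (x - k) * (x - (k + 1)))).sum
      = (u.map (fun x => x ^ 2)).sum - (2 * k + 1) * u.sum
        + (Multiset.card u : ℤ) * (k * (k + 1)) := by
  induction u using Multiset.induction_on with
  | empty => simp
  | cons a t ih =>
    simp only [Multiset.map_cons, Multiset.sum_cons, Multiset.card_cons, ih]
    push_cast
    ring

lemma all_zero_of_nonneg_sum_zero : ∀ (u : Multiset ℤ), (∀ x ∈ u, 0 ≤ x) →
    u.sum = 0 → ∀ x ∈ u, x = 0 := by
  intro u
  induction u using Multiset.induction_on with
  | empty => intro _ _ x hx; simp at hx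
  | cons a t ih =>
    intro hpos hsum x hx
    have hta : 0 ≤ a := hpos a (Multiset.mem_cons_self _ _)
    have htt : 0 ≤ t.sum := Multiset.sum_nonneg (fun y hy => hpos y (Multiset.mem_cons_of_mem hy))
    rw [Multiset.sum_cons] at hsum
    have ha0 : a = 0 := by omega
    have hts : t.sum = 0 := by omega
    rcases Multiset.mem_cons.mp hx with rfl | hx'
    · exact ha0
    · exact ih (fun y hy => hpos y (Multiset.mem_cons_of_mem hy)) hts x hx'

lemma count_card_eq (k : ℤ) : ∀ (u : Multiset ℤ), (∀ x ∈ u, x = k ∨ x = k + 1) →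
    u.count k + u.count (k + 1) = Multiset.card u := by
  intro u
  induction u using Multiset.induction_on with
  | empty => simp
  | cons a t ih =>
    intro h
    have ht := ih (fun x hx => h x (Multiset.mem_cons_of_mem hx))
    have hne : (k + 1 : ℤ) ≠ k := by omega
    rcases h a (Multiset.mem_cons_self _ _) with rfl | rfl
    · simp [Multiset.count_cons, hne, ht]
      omega
    · simp [Multiset.count_cons, hne.symm, ht]
      omega

lemma sum_count_eq (k : ℤ) : ∀ (u : Multiset ℤ), (∀ x ∈ u, x = k ∨ x = k + 1) →
    u.sum = k * (Multiset.card u : ℤ) + u.count (k + 1) := by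
  intro u
  induction u using Multiset.induction_on with
  | empty => simp
  | cons a t ih =>
    intro h
    have ht := ih (fun x hx => h x (Multiset.mem_cons_of_mem hx))
    have hne : (k + 1 : ℤ) ≠ k := by omega
    rcases h a (Multiset.mem_cons_self _ _) with rfl | rfl
    · simp only [Multiset.sum_cons, Multiset.count_cons, Multiset.card_cons, ht, hne,
        if_neg, if_false]
      push_cast
      ring
    · simp only [Multiset.sum_cons, Multiset.count_cons, Multiset.card_cons, ht, if_pos rfl]
      push_cast
      ring

lemma multiset_deg_eq (k : ℤ) (s t : Multiset ℤ)
    (hs : ∀ x ∈ s, x = k ∨ x = k + 1)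
    (hcard : Multiset.card s = Multiset.card t)
    (hsum : s.sum = t.sum)
    (hsq : (s.map (fun x => x ^ 2)).sum = (t.map (fun x => x ^ 2)).sum) : s = t := by
  have hfs : (s.map (fun x => (x - k) * (x - (k + 1)))).sum = 0 := by
    apply Multiset.sum_eq_zero
    intro y hy
    obtain ⟨x, hx, rfl⟩ := Multiset.mem_map.mp hy
    rcases hs x hx with rfl | rfl <;> ring
  have hft : (t.map (fun x => (x - k) * (x - (k + 1)))).sum = 0 := by
    rw [sum_fprod, ← hsq, ← hsum, ← hcard, ← sum_fprod, hfs]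
  have ht : ∀ x ∈ t, x = k ∨ x = k + 1 := by
    intro x hx
    have hnn : ∀ y ∈ t.map (fun x => (x - k) * (x - (k + 1))), 0 ≤ y := by
      intro y hy
      obtain ⟨z, hz, rfl⟩ := Multiset.mem_map.mp hy
      rcases le_or_gt z k with hle | hlt
      · have e : (z - k) * (z - (k + 1)) = (k - z) * ((k + 1) - z) := by ring
        rw [e]
        exact mul_nonneg (by omega) (by omega)
      · exact mul_nonneg (by omega) (by omega)
    have hz := all_zero_of_nonneg_sum_zero _ hnn hft _
      (Multiset.mem_map_of_mem _ hx)
    rcases mul_eq_zero.mp hz with h0 | h0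
    · left; omega
    · right; omega
  have hcount1 : t.count (k + 1) = s.count (k + 1) := by
    have h1 := sum_count_eq k s hs
    have h2 := sum_count_eq k t ht
    rw [hsum, hcard] at h1
    have : (s.count (k + 1) : ℤ) = t.count (k + 1) := by linarith
    exact_mod_cast this.symm
  have hcount0 : t.count k = s.count k := by
    have h1 := count_card_eq k s hs
    have h2 := count_card_eq k t ht
    omega
  ext a
  by_cases hak : a = k
  · rw [hak, hcount0]
  · by_cases hak1 : a = k + 1
    · rw [hak1, hcount1]
    · rw [Multiset.count_eq_zero_of_notMem, Multiset.count_eq_zero_of_notMem]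
      · intro hmem; rcases ht a hmem with h | h <;> [exact hak h; exact hak1 h]
      · intro hmem; rcases hs a hmem with h | h <;> [exact hak h; exact hak1 h]


open Finset

variable {V : Type*} [Fintype V]

lemma card_univ_val : Multiset.card (univ.val : Multiset V) = Fintype.card V :=
  Finset.card_univ

lemma row_sum_adj (G : SimpleGraph V) (i : V) :
    ∑ j, (G.adjMatrix ℚ) i j = (G.degree i : ℚ) := by
  simp [SimpleGraph.adjMatrix_apply, SimpleGraph.degree, SimpleGraph.neighborFinset_eq_filter]

lemma offdiag_sum (G : SimpleGraph V) (M : Matrix V V ℚ)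
    (hM : ∀ i j, i ≠ j → M i j * M j i = (G.adjMatrix ℚ) i j) :
    ∑ p ∈ univ.offDiag, M p.1 p.2 * M p.2 p.1 = ∑ i, (G.degree i : ℚ) := by
  have h1 : ∑ p ∈ univ.offDiag, M p.1 p.2 * M p.2 p.1
      = ∑ p ∈ univ.offDiag, (G.adjMatrix ℚ) p.1 p.2 :=
    Finset.sum_congr rfl (fun p hp => hM _ _ (Finset.mem_offDiag.mp hp).2.2)
  have h2 : ∑ p ∈ (univ : Finset V) ×ˢ univ, (G.adjMatrix ℚ) p.1 p.2
      = (∑ p ∈ (univ : Finset V).diag, (G.adjMatrix ℚ) p.1 p.2)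
        + ∑ p ∈ univ.offDiag, (G.adjMatrix ℚ) p.1 p.2 := by
    rw [← Finset.diag_union_offDiag, Finset.sum_union (Finset.disjoint_diag_offDiag _)]
  have h3 : ∑ p ∈ (univ : Finset V).diag, (G.adjMatrix ℚ) p.1 p.2 = 0 := by
    rw [Finset.sum_diag]
    simp
  have h4 : ∑ p ∈ (univ : Finset V) ×ˢ univ, (G.adjMatrix ℚ) p.1 p.2
      = ∑ i, (G.degree i : ℚ) := by
    rw [Finset.sum_product]
    exact Finset.sum_congr rfl (fun i _ => row_sum_adj G i)
  rw [h1]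
  linarith

lemma lap_diag (G : SimpleGraph V) (i : V) :
    (G.lapMatrix ℚ) i i = (G.degree i : ℚ) := by
  simp [SimpleGraph.lapMatrix, SimpleGraph.degMatrix, Matrix.sub_apply]

lemma lap_off (G : SimpleGraph V) (i j : V) (h : i ≠ j) :
    (G.lapMatrix ℚ) i j * (G.lapMatrix ℚ) j i = (G.adjMatrix ℚ) i j := by
  have hadj : G.Adj j i ↔ G.Adj i j := G.adj_comm j i
  simp only [SimpleGraph.lapMatrix, SimpleGraph.degMatrix, Matrix.sub_apply,
    Matrix.diagonal_apply_ne _ h, Matrix.diagonal_apply_ne _ h.symm,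
    SimpleGraph.adjMatrix_apply, hadj]
  by_cases hij : G.Adj i j <;> simp [hij]

lemma sl_diag (G : SimpleGraph V) (i : V) :
    (G.degMatrix ℚ + G.adjMatrix ℚ) i i = (G.degree i : ℚ) := by
  simp [SimpleGraph.degMatrix, Matrix.add_apply]

lemma sl_off (G : SimpleGraph V) (i j : V) (h : i ≠ j) :
    (G.degMatrix ℚ + G.adjMatrix ℚ) i j * (G.degMatrix ℚ + G.adjMatrix ℚ) j i
      = (G.adjMatrix ℚ) i j := by
  have hadj : G.Adj j i ↔ G.Adj i j := G.adj_comm j i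
  simp only [SimpleGraph.degMatrix, Matrix.add_apply,
    Matrix.diagonal_apply_ne _ h, Matrix.diagonal_apply_ne _ h.symm,
    SimpleGraph.adjMatrix_apply, hadj]
  by_cases hij : G.Adj i j <;> simp [hij]

lemma main_aux {V W : Type*} [Fintype V] [Fintype W] (G : SimpleGraph V) (H : SimpleGraph W)
    (hreg : ∀ u v : V, |(G.degree u : ℤ) - (G.degree v : ℤ)| ≤ 1)
    (A : Matrix W W ℚ) (B : Matrix V V ℚ)
    (hAd : ∀ i, A i i = (H.degree i : ℚ)) (hBd : ∀ i, B i i = (G.degree i : ℚ))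
    (hAo : ∀ i j, i ≠ j → A i j * A j i = (H.adjMatrix ℚ) i j)
    (hBo : ∀ i j, i ≠ j → B i j * B j i = (G.adjMatrix ℚ) i j)
    (h : cpoly A = cpoly B) :
    Finset.univ.val.map (fun w => H.degree w) = Finset.univ.val.map (fun v => G.degree v) := by
  have hcard : Fintype.card W = Fintype.card V := by
    rw [← cpoly_natDegree A, ← cpoly_natDegree B, h]
  rcases Nat.lt_or_ge (Fintype.card V) 2 with hn | hn
  · -- small case: all degrees are 0
    have hdG : ∀ v : V, G.degree v = 0 := fun v => by
      have := G.degree_lt_card_verts v; omega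
    have hdH : ∀ w : W, H.degree w = 0 := fun w => by
      have := H.degree_lt_card_verts w; omega
    have e1 : univ.val.map (fun w => H.degree w)
        = Multiset.replicate (Fintype.card V) 0 := by
      rw [Multiset.eq_replicate]
      constructor
      · rw [Multiset.card_map, card_univ_val, hcard]
      · intro b hb
        obtain ⟨w, -, rfl⟩ := Multiset.mem_map.mp hb
        exact hdH w
    have e2 : univ.val.map (fun v => G.degree v)
        = Multiset.replicate (Fintype.card V) 0 := by
      rw [Multiset.eq_replicate]
      constructor
      · rw [Multiset.card_map, card_univ_val]
      · intro b hb
        obtain ⟨v, -, rfl⟩ := Multiset.mem_map.mp hb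
        exact hdG v
    rw [e1, e2]
  · -- main case
    have hn' : 2 ≤ Fintype.card W := by omega
    have hsum : ∑ w, (H.degree w : ℚ) = ∑ v, (G.degree v : ℚ) := by
      have h1 := cpoly_coeff_pred A (by omega)
      have h2 := cpoly_coeff_pred B (by omega)
      rw [h, hcard] at h1
      rw [h1] at h2
      have h3 : ∑ i, A i i = ∑ i, B i i := by
        have := neg_injective h2
        linarith [this]
      calc ∑ w, (H.degree w : ℚ) = ∑ i, A i i :=
            (Finset.sum_congr rfl (fun i _ => (hAd i).symm))
        _ = ∑ i, B i i := h3
        _ = ∑ v, (G.degree v : ℚ) := Finset.sum_congr rfl (fun i _ => hBd i)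
    have hsq : ∑ w, (H.degree w : ℚ) ^ 2 = ∑ v, (G.degree v : ℚ) ^ 2 := by
      have h1 := cpoly_coeff_sub2 A hn'
      have h2 := cpoly_coeff_sub2 B hn
      rw [h, hcard] at h1
      rw [h1] at h2
      rw [offdiag_sum H A hAo, offdiag_sum G B hBo] at h2
      have emA : (univ.val.map (fun i => A i i))
          = univ.val.map (fun w => (H.degree w : ℚ)) :=
        Multiset.map_congr rfl (fun x _ => hAd x)
      have emB : (univ.val.map (fun i => B i i))
          = univ.val.map (fun v => (G.degree v : ℚ)) :=
        Multiset.map_congr rfl (fun x _ => hBd x)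
      rw [emA, emB] at h2
      have eqA : Esq (univ.val.map (fun w => (H.degree w : ℚ)))
          = ((∑ w, (H.degree w : ℚ)) ^ 2 - ∑ w, (H.degree w : ℚ) ^ 2) / 2 := by
        rw [Esq, Multiset.map_map]
        rfl
      have eqB : Esq (univ.val.map (fun v => (G.degree v : ℚ)))
          = ((∑ v, (G.degree v : ℚ)) ^ 2 - ∑ v, (G.degree v : ℚ) ^ 2) / 2 := by
        rw [Esq, Multiset.map_map]
        rfl
      rw [eqA, eqB, hsum] at h2
      linarith
    have hsumZ : ∑ w, (H.degree w : ℤ) = ∑ v, (G.degree v : ℤ) := by exact_mod_cast hsum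
    have hsqZ : ∑ w, (H.degree w : ℤ) ^ 2 = ∑ v, (G.degree v : ℤ) ^ 2 := by exact_mod_cast hsq
    have hne : Nonempty V := Fintype.card_pos_iff.mp (by omega)
    obtain ⟨v0, -, hv0⟩ := Finset.exists_min_image univ (fun v => G.degree v)
      ⟨Classical.arbitrary V, Finset.mem_univ _⟩
    have hkG : ∀ v : V, (G.degree v : ℤ) = (G.degree v0 : ℤ)
        ∨ (G.degree v : ℤ) = (G.degree v0 : ℤ) + 1 := by
      intro v
      have h1 := hreg v v0
      have h2 := hv0 v (Finset.mem_univ v)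
      rw [abs_le] at h1
      omega
    apply Multiset.map_injective (f := (Nat.cast : ℕ → ℤ))
      (fun a b hab => by exact_mod_cast hab)
    rw [Multiset.map_map, Multiset.map_map]
    refine (multiset_deg_eq ((G.degree v0 : ℤ)) _ _ ?_ ?_ ?_ ?_).symm
    · intro x hx
      obtain ⟨v, -, rfl⟩ := Multiset.mem_map.mp hx
      exact hkG v
    · rw [Multiset.card_map, Multiset.card_map, card_univ_val, card_univ_val, hcard]
    · exact hsumZ.symm
    · rw [Multiset.map_map, Multiset.map_map]
      exact hsqZ.symm


end NRAux

/-- The Laplacian permanental polynomial `per(x·I − L(G))` of a graph `G`,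
where `L(G) = D(G) − A(G)` is the Laplacian matrix. -/
def lapPermPoly {V : Type*} [Fintype V] (G : SimpleGraph V) : Polynomial ℚ :=
  Matrix.permanent
    (Matrix.diagonal (fun _ : V => (X : Polynomial ℚ)) - (G.lapMatrix ℚ).map Polynomial.C)

/-- The signless Laplacian matrix `Q(G) = D(G) + A(G)` of a graph `G`. -/
def signlessLapMatrix {V : Type*} [Fintype V] (G : SimpleGraph V) : Matrix V V ℚ :=
  G.degMatrix ℚ + G.adjMatrix ℚ

/-- The signless Laplacian permanental polynomial `per(x·I − Q(G))` of a graph `G`. -/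
def qPermPoly {V : Type*} [Fintype V] (G : SimpleGraph V) : Polynomial ℚ :=
  Matrix.permanent
    (Matrix.diagonal (fun _ : V => (X : Polynomial ℚ)) - (signlessLapMatrix G).map Polynomial.C)

/-- **Lemma 2.13.** If `G` is nearly regular (the degrees of any two vertices differ by at
most `1`) and `H` has the same Laplacian permanental polynomial as `G`, or the same
signless Laplacian permanental polynomial as `G`, then `H` has the same degree sequence
as `G` (the multisets of vertex degrees coincide). -/
theorem nearlyRegular_copermanental_degree_sequence
    {V W : Type*} [Fintype V] [Fintype W] (G : SimpleGraph V) (H : SimpleGraph W)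
    (hreg : ∀ u v : V, |(G.degree u : ℤ) - (G.degree v : ℤ)| ≤ 1)
    (h : lapPermPoly H = lapPermPoly G ∨ qPermPoly H = qPermPoly G) :
    Finset.univ.val.map (fun w => H.degree w) =
      Finset.univ.val.map (fun v => G.degree v) := by
  rcases h with hL | hQ
  · have h' : NRAux.cpoly (H.lapMatrix ℚ) = NRAux.cpoly (G.lapMatrix ℚ) := hL
    exact NRAux.main_aux G H hreg _ _ (NRAux.lap_diag H) (NRAux.lap_diag G)
      (NRAux.lap_off H) (NRAux.lap_off G) h'
  · have h' : NRAux.cpoly (H.degMatrix ℚ + H.adjMatrix ℚ)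
        = NRAux.cpoly (G.degMatrix ℚ + G.adjMatrix ℚ) := hQ
    exact NRAux.main_aux G H hreg _ _ (NRAux.sl_diag H) (NRAux.sl_diag G)
      (NRAux.sl_off H) (NRAux.sl_off G) h'
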